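/- For all real numbers p with 1 < p ≤ 2, there exists a constant C(p) > 0 such that for all vectors ξ, η in ℝ^N, |ξ - η|^p ≤ C(p) · (⟨|ξ|^{p-2}ξ - |η|^{p-2}η, ξ - η⟩)^{p/2} · (|ξ|^p + |η|^p)^{(2-p)/2}. -/

import Mathlib

open RealInnerProductSpace


private lemma myrpow_two (x : ℝ) : x ^ (2:ℝ) = x * x := by
  rw [show (2:ℝ) = ((2:ℕ):ℝ) by norm_num, Real.rpow_natCast]; ring

private lemma mystep (x : ℝ) (hx : 0 ≤ x) {r s : ℝ} (hr : r ≠ 0) (hs : s ≠ 0)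
    (hrs : r + 1 = s) : x ^ r * x = x ^ s := by
  rcases hx.eq_or_lt with h | h
  · simp [← h, Real.zero_rpow hr, Real.zero_rpow hs]
  · rw [← hrs, Real.rpow_add_one h.ne']

private lemma mysubadd {a b q : ℝ} (ha : 0 ≤ a) (hb : 0 ≤ b) (hq0 : 0 ≤ q) (hq1 : q ≤ 1) :
    (a + b) ^ q ≤ a ^ q + b ^ q := by
  have h := NNReal.rpow_add_le_add_rpow (Real.toNNReal a) (Real.toNNReal b) hq0 hq1
  have h2 : ((((Real.toNNReal a) + (Real.toNNReal b)) ^ q : NNReal) : ℝ)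
      ≤ (((Real.toNNReal a) ^ q + (Real.toNNReal b) ^ q : NNReal) : ℝ) := by exact_mod_cast h
  rw [NNReal.coe_add, NNReal.coe_rpow, NNReal.coe_rpow, NNReal.coe_rpow, NNReal.coe_add,
    Real.coe_toNNReal a ha, Real.coe_toNNReal b hb] at h2
  exact h2

-- endpoint t = -a*b
private lemma myE2 {p a b : ℝ} (hp1 : 1 < p) (hp2 : p < 2) (ha : 0 ≤ a) (hb : 0 ≤ b) :
    (p-1) * ((a+b)*(a+b)) * (a+b)^(p-2) ≤ a^p + b^p + (a^(p-2)+b^(p-2))*(a*b) := by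
  have hpne : p ≠ 0 := by linarith
  have hp2ne : p - 2 ≠ 0 := by linarith
  have hp1ne : p - 1 ≠ 0 := by linarith
  have hea : a^(p-2) * a = a^(p-1) := mystep a ha hp2ne hp1ne (by ring)
  have heb : b^(p-2) * b = b^(p-1) := mystep b hb hp2ne hp1ne (by ring)
  have hea2 : a^(p-1) * a = a^p := mystep a ha hp1ne hpne (by ring)
  have heb2 : b^(p-1) * b = b^p := mystep b hb hp1ne hpne (by ring)
  have hab : 0 ≤ a + b := by linarith
  have hesum : (a+b)^(p-2) * (a+b) = (a+b)^(p-1) := mystep _ hab hp2ne hp1ne (by ring)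
  have hesum2 : (a+b)^(p-1) * (a+b) = (a+b)^p := mystep _ hab hp1ne hpne (by ring)
  have hsub : (a+b)^(p-1) ≤ a^(p-1) + b^(p-1) := mysubadd ha hb (by linarith) (by linarith)
  have h1 : (p-1) * ((a+b)*(a+b)) * (a+b)^(p-2) = (p-1) * (a+b)^p := by
    rw [← hesum2, ← hesum]; ring
  have h2 : (p-1) * (a+b)^p ≤ (a+b)^p := by
    nlinarith [Real.rpow_nonneg hab p]
  have h3 : (a+b)^p ≤ (a+b) * (a^(p-1) + b^(p-1)) := by
    calc (a+b)^p = (a+b)^(p-1) * (a+b) := hesum2.symm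
      _ ≤ (a^(p-1) + b^(p-1)) * (a+b) := mul_le_mul_of_nonneg_right hsub hab
      _ = (a+b) * (a^(p-1) + b^(p-1)) := by ring
  have h4 : (a+b) * (a^(p-1) + b^(p-1)) = a^p + b^p + (a^(p-2)+b^(p-2))*(a*b) := by
    linear_combination hea2 + heb2 - b * hea - a * heb
  linarith

-- endpoint t = a*b, assuming b ≤ a
private lemma myE1 {p a b : ℝ} (hp1 : 1 < p) (hp2 : p < 2) (hb : 0 ≤ b) (hba : b ≤ a) :
    (p-1) * ((a-b)*(a-b)) * (a+b)^(p-2) ≤ a^p + b^p - (a^(p-2)+b^(p-2))*(a*b) := by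
  have ha : 0 ≤ a := le_trans hb hba
  have hpne : p ≠ 0 := by linarith
  have hp2ne : p - 2 ≠ 0 := by linarith
  have hp1ne : p - 1 ≠ 0 := by linarith
  rcases ha.eq_or_lt with h | hapos
  · have hb0 : b = 0 := le_antisymm (h ▸ hba) hb
    simp [← h, hb0, Real.zero_rpow hpne, Real.zero_rpow hp2ne]
  have hea : a^(p-2) * a = a^(p-1) := mystep a ha hp2ne hp1ne (by ring)
  have heb : b^(p-2) * b = b^(p-1) := mystep b hb hp2ne hp1ne (by ring)
  have hea2 : a^(p-1) * a = a^p := mystep a ha hp1ne hpne (by ring)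
  have heb2 : b^(p-1) * b = b^p := mystep b hb hp1ne hpne (by ring)
  have hap1 : (0:ℝ) < a^(p-1) := Real.rpow_pos_of_pos hapos _
  -- Bernoulli
  have hs : -1 ≤ b/a - 1 := by
    have : 0 ≤ b/a := div_nonneg hb ha
    linarith
  have hbern := rpow_one_add_le_one_add_mul_self hs (p := p-1) (by linarith) (by linarith)
  rw [show 1 + (b/a - 1) = b/a by ring] at hbern
  have key1 : a^(p-1) * (b/a)^(p-1) = b^(p-1) := by
    rw [← Real.mul_rpow ha (div_nonneg hb ha), show a*(b/a) = b by field_simp]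
  have key2 : a^(p-1) * (b/a) = a^(p-2) * b := by
    rw [← hea]; field_simp
  have h5 : b^(p-1) ≤ a^(p-1) + (p-1)*(a^(p-2)*b - a^(p-1)) := by
    nlinarith [mul_le_mul_of_nonneg_left hbern hap1.le, key1, key2]
  have h6 : (p-1)*(a^(p-1) - a^(p-2)*b) ≤ a^(p-1) - b^(p-1) := by nlinarith [h5]
  have hA : (a+b)^(p-2) ≤ a^(p-2) :=
    Real.rpow_le_rpow_of_nonpos hapos (by linarith) (by linarith)
  have hgoal : a^p + b^p - (a^(p-2)+b^(p-2))*(a*b) = (a^(p-1)-b^(p-1))*(a-b) := by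
    linear_combination -hea2 - heb2 - b * hea - a * heb
  calc (p-1) * ((a-b)*(a-b)) * (a+b)^(p-2)
      ≤ (p-1) * ((a-b)*(a-b)) * a^(p-2) :=
        mul_le_mul_of_nonneg_left hA (mul_nonneg (by linarith) (mul_self_nonneg _))
    _ = ((p-1)*(a^(p-1) - a^(p-2)*b)) * (a-b) := by linear_combination (p-1)*(a-b)*hea
    _ ≤ (a^(p-1) - b^(p-1)) * (a-b) := mul_le_mul_of_nonneg_right h6 (by linarith)
    _ = a^p + b^p - (a^(p-2)+b^(p-2))*(a*b) := hgoal.symm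

-- key scalar inequality
private lemma mykey {p a b t : ℝ} (hp1 : 1 < p) (hp2 : p < 2) (ha : 0 ≤ a) (hb : 0 ≤ b)
    (ht1 : -(a*b) ≤ t) (ht2 : t ≤ a*b) :
    (p-1) * (a*a + b*b - 2*t) * (a+b)^(p-2) ≤ a^p + b^p - (a^(p-2)+b^(p-2))*t := by
  have hE2 := myE2 hp1 hp2 ha hb
  have hE1 : (p-1) * ((a-b)*(a-b)) * (a+b)^(p-2) ≤ a^p + b^p - (a^(p-2)+b^(p-2))*(a*b) := by
    rcases le_total b a with h | h
    · exact myE1 hp1 hp2 hb h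
    · have := myE1 hp1 hp2 ha h
      rw [add_comm b a] at this
      nlinarith [this]
  rcases le_total (a^(p-2)+b^(p-2)) (2*(p-1)*(a+b)^(p-2)) with h | h
  · nlinarith [mul_nonneg (sub_nonneg.2 h) (by linarith : (0:ℝ) ≤ t + a*b)]
  · nlinarith [mul_nonneg (sub_nonneg.2 h) (by linarith : (0:ℝ) ≤ a*b - t)]

/-- For all real `p` with `1 < p ≤ 2`, there is `C(p) > 0` such that for all `ξ η ∈ ℝ^N`,
`|ξ - η|^p ≤ C(p) ⟨|ξ|^{p-2}ξ - |η|^{p-2}η, ξ - η⟩^{p/2} (|ξ|^p + |η|^p)^{(2-p)/2}`. -/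
theorem stmt1 (N : ℕ) (p : ℝ) (hp1 : 1 < p) (hp2 : p ≤ 2) :
    ∃ C : ℝ, 0 < C ∧ ∀ ξ η : EuclideanSpace ℝ (Fin N),
      ‖ξ - η‖ ^ p ≤
        C * (⟪(‖ξ‖ ^ (p - 2)) • ξ - (‖η‖ ^ (p - 2)) • η, ξ - η⟫) ^ (p / 2)
          * (‖ξ‖ ^ p + ‖η‖ ^ p) ^ ((2 - p) / 2) := by
  rcases hp2.eq_or_lt with heq | hlt
  · -- p = 2
    subst heq
    refine ⟨1, one_pos, fun ξ η => ?_⟩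
    rw [show (2:ℝ) - 2 = 0 by norm_num]
    simp only [Real.rpow_zero, one_smul, one_mul]
    rw [show (2:ℝ)/2 = 1 by norm_num, Real.rpow_one, show ((0:ℝ))/2 = 0 by norm_num,
      Real.rpow_zero, mul_one, real_inner_self_eq_norm_mul_norm, myrpow_two]
  · -- 1 < p < 2
    have hp0 : (0:ℝ) < p := by linarith
    have hpm1 : (0:ℝ) < p - 1 := by linarith
    have hppos : (0:ℝ) < (p-1)^(p/2) := Real.rpow_pos_of_pos hpm1 _
    have h2pos : (0:ℝ) < (2:ℝ)^(p*((2-p)/2)) := Real.rpow_pos_of_pos two_pos _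
    refine ⟨(2:ℝ)^(p*((2-p)/2)) / (p-1)^(p/2), div_pos h2pos hppos, fun ξ η => ?_⟩
    set C : ℝ := (2:ℝ)^(p*((2-p)/2)) / (p-1)^(p/2) with hC_def
    set a : ℝ := ‖ξ‖ with ha_def
    set b : ℝ := ‖η‖ with hb_def
    set n : ℝ := ‖ξ - η‖ with hn_def
    set t : ℝ := ⟪ξ, η⟫ with ht_def
    have ha : 0 ≤ a := norm_nonneg ξ
    have hb : 0 ≤ b := norm_nonneg η
    have hn : 0 ≤ n := norm_nonneg _
    obtain ⟨ht1, ht2⟩ := abs_le.mp (abs_real_inner_le_norm ξ η)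
    have ht1' : -(a*b) ≤ t := ht1
    have ht2' : t ≤ a*b := ht2
    have hpne : p ≠ 0 := by linarith
    have hp2ne : p - 2 ≠ 0 := by linarith
    have hp1ne : p - 1 ≠ 0 := by linarith
    have e1a : a^(p-2)*a = a^(p-1) := mystep a ha hp2ne hp1ne (by ring)
    have e2a : a^(p-1)*a = a^p := mystep a ha hp1ne hpne (by ring)
    have e1b : b^(p-2)*b = b^(p-1) := mystep b hb hp2ne hp1ne (by ring)
    have e2b : b^(p-1)*b = b^p := mystep b hb hp1ne hpne (by ring)
    have hI : ⟪(a^(p-2)) • ξ - (b^(p-2)) • η, ξ - η⟫ = a^p + b^p - (a^(p-2)+b^(p-2)) * t := by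
      rw [inner_sub_left, inner_sub_right, inner_sub_right, real_inner_smul_left,
        real_inner_smul_left, real_inner_smul_left, real_inner_smul_left,
        real_inner_self_eq_norm_mul_norm, real_inner_self_eq_norm_mul_norm,
        real_inner_comm ξ η]
      rw [← ha_def, ← hb_def, ← ht_def]
      linear_combination a*e1a + e2a + b*e1b + e2b
    have hD : n * n = a*a + b*b - 2*t := by
      rw [hn_def, ← real_inner_self_eq_norm_mul_norm, inner_sub_left, inner_sub_right,
        inner_sub_right, real_inner_self_eq_norm_mul_norm, real_inner_self_eq_norm_mul_norm,
        real_inner_comm ξ η, ← ha_def, ← hb_def, ← ht_def]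
      ring
    have hkey : (p-1) * (n*n) * (a+b)^(p-2)
        ≤ ⟪(a^(p-2)) • ξ - (b^(p-2)) • η, ξ - η⟫ := by
      rw [hI, hD]
      exact mykey hp1 hlt ha hb ht1' ht2'
    -- trivial case ξ = η = 0
    by_cases hab0 : a + b = 0
    · have hxa : a = 0 := by linarith
      have hxb : b = 0 := by linarith
      have hn0 : n = 0 := by
        have hx : ξ = 0 := norm_eq_zero.mp hxa
        have hy : η = 0 := norm_eq_zero.mp hxb
        rw [hn_def, hx, hy, sub_self, norm_zero]
      have ht0 : t = 0 := by
        have h1 : t ≤ 0 := by nlinarith [ht2']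
        have h2 : 0 ≤ t := by nlinarith [ht1']
        linarith
      have hI00 : ⟪(a^(p-2)) • ξ - (b^(p-2)) • η, ξ - η⟫ = 0 := by
        rw [hI, hxa, hxb, ht0, Real.zero_rpow hpne, Real.zero_rpow hp2ne]
        ring
      rw [hn0, Real.zero_rpow hpne, hI00,
        Real.zero_rpow (show p/2 ≠ 0 from (by linarith : (0:ℝ) < p/2).ne')]
      simp only [mul_zero, zero_mul, le_refl]
    have hab : 0 < a + b := lt_of_le_of_ne (by linarith) (Ne.symm hab0)
    have hlow0 : 0 ≤ (p-1) * (n*n) * (a+b)^(p-2) :=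
      mul_nonneg (mul_nonneg (by linarith) (mul_self_nonneg n)) (Real.rpow_nonneg hab.le _)
    have hI0 : 0 ≤ ⟪(a^(p-2)) • ξ - (b^(p-2)) • η, ξ - η⟫ := le_trans hlow0 hkey
    have h1 : ((p-1) * (n*n) * (a+b)^(p-2))^(p/2)
        ≤ (⟪(a^(p-2)) • ξ - (b^(p-2)) • η, ξ - η⟫)^(p/2) :=
      Real.rpow_le_rpow hlow0 hkey (by positivity)
    have h2 : ((p-1) * (n*n) * (a+b)^(p-2))^(p/2)
        = (p-1)^(p/2) * n^p * (a+b)^((p-2)*(p/2)) := by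
      rw [Real.mul_rpow (mul_nonneg (by linarith) (mul_self_nonneg n)) (Real.rpow_nonneg hab.le _),
        Real.mul_rpow (by linarith) (mul_self_nonneg n),
        ← myrpow_two n, ← Real.rpow_mul hn, show (2:ℝ)*(p/2) = p by ring,
        ← Real.rpow_mul hab.le]
    have hmax : a + b ≤ 2 * max a b := by
      rcases le_total a b with h | h
      · rw [max_eq_right h]; linarith
      · rw [max_eq_left h]; linarith
    have hstep : (a+b)^p ≤ 2^p * (a^p + b^p) := by
      calc (a+b)^p ≤ (2 * max a b)^p := Real.rpow_le_rpow hab.le hmax hp0.le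
        _ = 2^p * (max a b)^p := Real.mul_rpow (by norm_num) (le_trans ha (le_max_left a b))
        _ ≤ 2^p * (a^p + b^p) := by
            apply mul_le_mul_of_nonneg_left _ (Real.rpow_nonneg (by norm_num) p)
            rcases le_total a b with h | h
            · rw [max_eq_right h]; linarith [Real.rpow_nonneg ha p]
            · rw [max_eq_left h]; linarith [Real.rpow_nonneg hb p]
    have h2p : (0:ℝ) < (2:ℝ)^p := Real.rpow_pos_of_pos two_pos p
    have h3 : (a+b)^p / 2^p ≤ a^p + b^p := by
      rw [div_le_iff₀ h2p]; linarith [hstep]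
    have h4 : ((a+b)^p / 2^p)^((2-p)/2) ≤ (a^p + b^p)^((2-p)/2) :=
      Real.rpow_le_rpow (div_nonneg (Real.rpow_nonneg hab.le p) h2p.le) h3 (by linarith)
    have h5 : ((a+b)^p / 2^p)^((2-p)/2)
        = (a+b)^(p*((2-p)/2)) / 2^(p*((2-p)/2)) := by
      rw [Real.div_rpow (Real.rpow_nonneg hab.le p) h2p.le,
        ← Real.rpow_mul hab.le, ← Real.rpow_mul (by norm_num : (0:ℝ) ≤ 2)]
    have hS : (a+b)^(p*((2-p)/2)) / 2^(p*((2-p)/2)) ≤ (a^p + b^p)^((2-p)/2) := h5 ▸ h4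
    have hsum0 : (a+b)^((p-2)*(p/2)) * (a+b)^(p*((2-p)/2)) = 1 := by
      rw [← Real.rpow_add hab, show (p-2)*(p/2) + p*((2-p)/2) = 0 by ring, Real.rpow_zero]
    have hfinal : C * ((p-1)^(p/2) * n^p * (a+b)^((p-2)*(p/2)))
        * ((a+b)^(p*((2-p)/2)) / 2^(p*((2-p)/2))) = n^p := by
      rw [hC_def]
      calc (2:ℝ)^(p*((2-p)/2)) / (p-1)^(p/2) * ((p-1)^(p/2) * n^p * (a+b)^((p-2)*(p/2)))
            * ((a+b)^(p*((2-p)/2)) / 2^(p*((2-p)/2)))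
          = n^p * (((a+b)^((p-2)*(p/2)) * (a+b)^(p*((2-p)/2)))
              * ((2^(p*((2-p)/2)) / 2^(p*((2-p)/2))) * ((p-1)^(p/2) / (p-1)^(p/2)))) := by
            ring
        _ = n^p := by rw [hsum0, div_self h2pos.ne', div_self hppos.ne']; ring
    have hC0 : 0 ≤ C := (div_pos h2pos hppos).le
    calc n^p = C * ((p-1)^(p/2) * n^p * (a+b)^((p-2)*(p/2)))
          * ((a+b)^(p*((2-p)/2)) / 2^(p*((2-p)/2))) := hfinal.symm
      _ ≤ C * (⟪(a^(p-2)) • ξ - (b^(p-2)) • η, ξ - η⟫)^(p/2) * (a^p + b^p)^((2-p)/2) := by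
          apply mul_le_mul
          · exact mul_le_mul_of_nonneg_left (h2 ▸ h1) hC0
          · exact hS
          · exact div_nonneg (Real.rpow_nonneg hab.le _) h2pos.le
          · exact mul_nonneg hC0 (Real.rpow_nonneg hI0 _)
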